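/- Let (M, 0, +) be a partial commutative monoid, let I be a finite set, and let (I_j)_{j∈J} be a finite family of pairwise disjoint sets with ⋃_{j∈J} I_j = I. Let (a_i)_{i∈I} be a family in M. The following are equivalent: (1) (a_i)_{i∈I} is summable; (2) for every j ∈ J the family (a_i)_{i∈I_j} is summable and the family (∑_{i∈I_j} a_i)_{j∈J} is summable. When these hold, ∑_{i∈I} a_i = ∑_{j∈J} ∑_{i∈I_j} a_i. -/

import Mathlib

/-- A partial commutative monoid: `add` is a partial binary operation
represented via `Option`. -/
structure PCM (M : Type*) where
  zero : M
  add : M → M → Option M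
  zero_add : ∀ a, add zero a = some a
  comm : ∀ a b c, add a b = some c → add b a = some c
  assoc : ∀ a b c s t, add a b = some s → add s c = some t →
    ∃ u, add b c = some u ∧ add a u = some t

/-- The (partial) sum of a finite sequence of elements, defined inductively. -/
def PCM.sumList {M : Type*} (P : PCM M) (l : List M) : Option M :=
  l.foldl (fun acc a => acc.bind fun s => P.add s a) (some P.zero)

/-- A finite family `(a i)_{i ∈ s}` is summable if some repetition-free
enumeration of `s` yields a summable sequence. -/
def PCM.SummableFam {M α : Type*} (P : PCM M) (s : Finset α) (a : α → M) : Prop :=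
  ∃ l : List α, l.Nodup ∧ (∀ i, i ∈ l ↔ i ∈ s) ∧ (P.sumList (l.map a)).isSome

/-- The (partial) sum of a finite family, computed along an enumeration of the
index set (by permutation-invariance this does not depend on the enumeration). -/
noncomputable def PCM.famSum {M α : Type*} (P : PCM M) (s : Finset α) (a : α → M) :
    Option M :=
  P.sumList (s.toList.map a)

namespace PCMAux

variable {M : Type*} (P : PCM M)

lemma add_comm' (x y : M) : P.add x y = P.add y x := by
  cases hx : P.add x y with
  | none =>
    cases hy : P.add y x with
    | none => rfl
    | some c => exact absurd (P.comm _ _ _ hy) (by simp [hx])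
  | some c => exact (P.comm _ _ _ hx).symm

lemma add_zero' (x : M) : P.add x P.zero = some x :=
  P.comm _ _ _ (P.zero_add x)

lemma exchange (x a s : M) :
    (P.add x a).bind (fun y => P.add y s) = (P.add a s).bind (fun u => P.add x u) := by
  apply Option.ext
  intro t
  simp only [Option.mem_def, Option.bind_eq_some_iff]
  constructor
  · rintro ⟨y, hy, hys⟩
    obtain ⟨u, hu, hxu⟩ := P.assoc x a s y t hy hys
    exact ⟨u, hu, hxu⟩
  · rintro ⟨u, hu, hxu⟩
    obtain ⟨v, hv, hsv⟩ := P.assoc s a x u t (P.comm _ _ _ hu) (P.comm _ _ _ hxu)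
    exact ⟨v, P.comm _ _ _ hv, P.comm _ _ _ hsv⟩

/-- Partial sum of a list starting from `x`. -/
def sumFrom (x : M) (l : List M) : Option M :=
  l.foldl (fun acc a => acc.bind fun s => P.add s a) (some x)

lemma foldl_none (l : List M) :
    l.foldl (fun acc a => acc.bind fun s => P.add s a) none = none := by
  induction l with
  | nil => rfl
  | cons a l ih => simpa using ih

lemma sumFrom_cons (x a : M) (l : List M) :
    sumFrom P x (a :: l) = (P.add x a).bind fun y => sumFrom P y l := by
  cases h : P.add x a with
  | none => simp [sumFrom, h, foldl_none]
  | some y => simp [sumFrom, h]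

lemma sumFrom_eq (l : List M) (x : M) :
    sumFrom P x l = (P.sumList l).bind (fun s => P.add x s) := by
  induction l generalizing x with
  | nil => simp [sumFrom, PCM.sumList, add_zero']
  | cons a l ih =>
    have hL : P.sumList (a :: l) = (P.sumList l).bind (fun s => P.add a s) := by
      show sumFrom P P.zero (a :: l) = _
      rw [sumFrom_cons, P.zero_add]
      simpa using ih a
    rw [sumFrom_cons, hL]
    cases hl : P.sumList l with
    | none =>
      simp only [ih, hl]
      cases hxa : P.add x a <;> simp
    | some s =>
      calc (P.add x a).bind (fun y => sumFrom P y l)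
          = (P.add x a).bind (fun y => P.add y s) := by
            apply Option.bind_congr; intro y _; rw [ih, hl]; rfl
        _ = (P.add a s).bind (fun u => P.add x u) := exchange P x a s
        _ = ((some s).bind fun s' => P.add a s').bind fun u => P.add x u := rfl

lemma sumList_cons (a : M) (l : List M) :
    P.sumList (a :: l) = (P.sumList l).bind (fun s => P.add a s) := by
  show sumFrom P P.zero (a :: l) = _
  rw [sumFrom_cons, P.zero_add]
  simpa using sumFrom_eq P l a

lemma sumList_append (l₁ l₂ : List M) :
    P.sumList (l₁ ++ l₂) =
      (P.sumList l₁).bind fun s₁ => (P.sumList l₂).bind fun s₂ => P.add s₁ s₂ := by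
  show (l₁ ++ l₂).foldl _ _ = _
  rw [List.foldl_append]
  cases h : P.sumList l₁ with
  | none =>
    show List.foldl _ (P.sumList l₁) l₂ = _
    rw [h]; simpa using foldl_none P l₂
  | some s =>
    show List.foldl _ (P.sumList l₁) l₂ = _
    rw [h]
    simpa [sumFrom] using sumFrom_eq P l₂ s

lemma sumList_perm {l l' : List M} (h : l.Perm l') : P.sumList l = P.sumList l' := by
  induction h with
  | nil => rfl
  | cons a _ ih => rw [sumList_cons, sumList_cons, ih]
  | swap a b l =>
    rw [sumList_cons, sumList_cons, sumList_cons, sumList_cons]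
    cases hl : P.sumList l with
    | none => rfl
    | some s =>
      simp only [Option.bind_some]
      rw [← exchange P a b s, ← exchange P b a s, add_comm' P a b]
  | trans _ _ ih₁ ih₂ => rw [ih₁, ih₂]

variable {α : Type*}

lemma sumList_eq_famSum (s : Finset α) (a : α → M) {l : List α}
    (hn : l.Nodup) (hm : ∀ i, i ∈ l ↔ i ∈ s) :
    P.sumList (l.map a) = P.famSum s a := by
  have hp : l.Perm s.toList :=
    (List.perm_ext_iff_of_nodup hn s.nodup_toList).mpr (by simpa [Finset.mem_toList] using hm)
  exact sumList_perm P (hp.map a)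

lemma summable_iff_isSome (s : Finset α) (a : α → M) :
    P.SummableFam s a ↔ (P.famSum s a).isSome := by
  constructor
  · rintro ⟨l, hn, hm, hs⟩
    rwa [sumList_eq_famSum P s a hn hm] at hs
  · intro h
    exact ⟨s.toList, s.nodup_toList, fun i => Finset.mem_toList, h⟩

variable {β : Type*}

lemma key₁ (Is : β → Finset α) (a : α → M) (js : List β) (t : M)
    (h : P.sumList ((js.map fun j => ((Is j).toList.map a)).flatten) = some t) :
    (∀ j ∈ js, (P.famSum (Is j) a).isSome) ∧
      P.sumList (js.map fun j => (P.famSum (Is j) a).getD P.zero) = some t := by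
  induction js generalizing t with
  | nil => simpa using h
  | cons j js ih =>
    rw [List.map_cons, List.flatten_cons, sumList_append] at h
    rw [Option.bind_eq_some_iff] at h
    obtain ⟨s, hs, h2⟩ := h
    rw [Option.bind_eq_some_iff] at h2
    obtain ⟨s', hs', hadd⟩ := h2
    obtain ⟨hall, hsum⟩ := ih s' hs'
    have hc : P.famSum (Is j) a = some s := hs
    refine ⟨?_, ?_⟩
    · intro j' hj'
      rcases List.mem_cons.mp hj' with rfl | hj'
      · simp [hc]
      · exact hall j' hj'
    · rw [List.map_cons, sumList_cons, hsum, hc]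
      simpa using hadd

lemma key₂ (Is : β → Finset α) (a : α → M) (js : List β) (t : M)
    (hall : ∀ j ∈ js, (P.famSum (Is j) a).isSome)
    (h : P.sumList (js.map fun j => (P.famSum (Is j) a).getD P.zero) = some t) :
    P.sumList ((js.map fun j => ((Is j).toList.map a)).flatten) = some t := by
  induction js generalizing t with
  | nil => simpa using h
  | cons j js ih =>
    obtain ⟨s, hc⟩ := Option.isSome_iff_exists.mp (hall j (by simp))
    rw [List.map_cons, sumList_cons, hc] at h
    rw [Option.bind_eq_some_iff] at h
    obtain ⟨s', hs', hadd⟩ := h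
    rw [List.map_cons, List.flatten_cons, sumList_append]
    have : P.sumList ((Is j).toList.map a) = some s := hc
    rw [this, ih s' (fun j' hj' => hall j' (by simp [hj'])) hs']
    simpa using hadd

end PCMAux

open PCMAux in
theorem stmt1 {M α β : Type*} [DecidableEq α] (P : PCM M)
    (I : Finset α) (J : Finset β) (Is : β → Finset α)
    (hdisj : ∀ j ∈ J, ∀ j' ∈ J, j ≠ j' → Disjoint (Is j) (Is j'))
    (hcover : I = J.biUnion Is) (a : α → M) :
    (P.SummableFam I a ↔
      (∀ j ∈ J, P.SummableFam (Is j) a) ∧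
        P.SummableFam J (fun j => (P.famSum (Is j) a).getD P.zero)) ∧
    (P.SummableFam I a →
      P.famSum I a = P.famSum J (fun j => (P.famSum (Is j) a).getD P.zero)) := by
  classical
  set b : β → M := fun j => (P.famSum (Is j) a).getD P.zero with hb
  set L : List α := (J.toList.map fun j => (Is j).toList).flatten with hL
  have hLn : L.Nodup := by
    rw [hL, List.nodup_flatten]
    constructor
    · intro l hl
      obtain ⟨j, _, rfl⟩ := List.mem_map.mp hl
      exact (Is j).nodup_toList
    · rw [List.pairwise_map]
      refine (J.nodup_toList : J.toList.Pairwise (· ≠ ·)).imp_of_mem ?_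
      intro j j' hj hj' hne
      have hd := hdisj j (Finset.mem_toList.mp hj) j' (Finset.mem_toList.mp hj') hne
      intro x hx hx'
      exact (Finset.disjoint_left.mp hd (by simpa using hx)) (by simpa using hx')
  have hLm : ∀ i, i ∈ L ↔ i ∈ I := by
    intro i
    simp only [hL, List.mem_flatten, List.mem_map, hcover, Finset.mem_biUnion]
    constructor
    · rintro ⟨l, ⟨j, hj, rfl⟩, hi⟩
      exact ⟨j, Finset.mem_toList.mp hj, by simpa using hi⟩
    · rintro ⟨j, hj, hi⟩
      exact ⟨(Is j).toList, ⟨j, Finset.mem_toList.mpr hj, rfl⟩, by simpa using hi⟩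
  have hmapL : L.map a = (J.toList.map fun j => ((Is j).toList.map a)).flatten := by
    rw [hL, List.map_flatten, List.map_map]
    rfl
  have hIL : P.famSum I a = P.sumList (L.map a) :=
    (sumList_eq_famSum P I a hLn hLm).symm
  have hJb : P.famSum J b = P.sumList (J.toList.map b) := rfl
  -- main equivalences
  have fwd : P.SummableFam I a →
      (∀ j ∈ J, P.SummableFam (Is j) a) ∧ P.SummableFam J b ∧
        P.famSum I a = P.famSum J b := by
    intro h
    have hsome := (summable_iff_isSome P I a).mp h
    obtain ⟨t, ht⟩ := Option.isSome_iff_exists.mp hsome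
    have ht' : P.sumList ((J.toList.map fun j => ((Is j).toList.map a)).flatten) = some t := by
      rw [← hmapL, ← hIL]; exact ht
    obtain ⟨hall, hsum⟩ := key₁ P Is a J.toList t ht'
    refine ⟨?_, ?_, ?_⟩
    · intro j hj
      exact (summable_iff_isSome P (Is j) a).mpr (hall j (Finset.mem_toList.mpr hj))
    · exact (summable_iff_isSome P J b).mpr (by rw [hJb, hsum]; rfl)
    · rw [ht, hJb, hsum]
  refine ⟨⟨fun h => ⟨(fwd h).1, (fwd h).2.1⟩, ?_⟩, fun h => (fwd h).2.2⟩
  rintro ⟨hall, hJ⟩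
  obtain ⟨t, ht⟩ := Option.isSome_iff_exists.mp ((summable_iff_isSome P J b).mp hJ)
  have hall' : ∀ j ∈ J.toList, (P.famSum (Is j) a).isSome := fun j hj =>
    (summable_iff_isSome P (Is j) a).mp (hall j (Finset.mem_toList.mp hj))
  have := key₂ P Is a J.toList t hall' (by rw [← hJb]; exact ht)
  rw [summable_iff_isSome, hIL, hmapL, this]
  rfl
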